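/- arXiv:1606.08972 — 7 statements merged into one kernel-verified Lean document; each statement's English description precedes it below -/
import Mathlib

section
/- Let G be a graph, L a linear order on V(G), and I a set of vertices such that WReach_r[G,L,v] ∩ I = {v} for every v ∈ I. Then for every v ∈ I, after deleting the set WReach_r[G,L,v] \ {v} from G, the vertex v is at distance greater than r from every other vertex of I in the resulting graph. -/
/-- The set of vertices weakly r-reachable from v with respect to L. -/
def WReach {V : Type*} (G : SimpleGraph V) (L : LinearOrder V) (r : ℕ) (v : V) : Set V :=
  {u | ∃ p : G.Walk v u, p.IsPath ∧ p.length ≤ r ∧ ∀ w ∈ p.support, L.le u w}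

/-- If WReach_r[G,L,v] ∩ I = {v} for all v ∈ I, then deleting WReach_r[G,L,v] \ {v}
leaves v at distance greater than r from every other vertex of I: every walk of the
deleted graph from v to u ∈ I, u ≠ v, has length greater than r. -/
theorem stmt5 {V : Type*} (G : SimpleGraph V) (L : LinearOrder V) (r : ℕ) (I : Set V)
    (hI : ∀ v ∈ I, WReach G L r v ∩ I = {v}) :
    ∀ v ∈ I, ∀ u ∈ I, u ≠ v → ∀ p : G.Walk v u,
      (∀ w ∈ p.support, w ∉ WReach G L r v \ {v}) → r < p.length := by
  letI := L
  intro v hv u hu hne p hp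
  by_contra hle
  push_neg at hle
  -- minimum vertex on the support of p
  obtain ⟨m, hm_mem, hm_min⟩ : ∃ m ∈ p.support, ∀ w ∈ p.support, L.le m w := by
    classical
    have hne : p.support.toFinset.Nonempty := by
      simp [List.toFinset_nonempty_iff, p.support_ne_nil]
    refine ⟨p.support.toFinset.min' hne, ?_, fun w hw => ?_⟩
    · simpa using p.support.toFinset.min'_mem hne
    · exact p.support.toFinset.min'_le w (by simpa using hw)
  -- m is weakly reachable from v
  have hmW : m ∈ WReach G L r v := by
    refine ⟨(p.takeUntil m hm_mem).bypass, SimpleGraph.Walk.bypass_isPath _, ?_, ?_⟩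
    · exact le_trans (le_trans (SimpleGraph.Walk.length_bypass_le _)
        (SimpleGraph.Walk.length_takeUntil_le p hm_mem)) hle
    · intro w hw
      exact hm_min w (p.support_takeUntil_subset hm_mem
        (SimpleGraph.Walk.support_bypass_subset _ hw))
  -- hence m = v
  have hmv : m = v := by
    have := hp m hm_mem
    simp only [Set.mem_diff, Set.mem_singleton_iff, not_and, not_not] at this
    exact this hmW
  subst hmv
  -- now m is weakly reachable from u
  have hvW : m ∈ WReach G L r u := by
    refine ⟨p.reverse.bypass, SimpleGraph.Walk.bypass_isPath _, ?_, ?_⟩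
    · exact le_trans (le_trans (SimpleGraph.Walk.length_bypass_le _)
        (by rw [SimpleGraph.Walk.length_reverse])) hle
    · intro w hw
      refine hm_min w ?_
      have := SimpleGraph.Walk.support_bypass_subset _ hw
      rwa [SimpleGraph.Walk.support_reverse, List.mem_reverse] at this
  -- contradiction with hI u
  have : m ∈ WReach G L r u ∩ I := ⟨hvW, hv⟩
  rw [hI u hu] at this
  exact hne this.symm
end

section
/- Let G be a graph and r, m non-negative integers. Suppose wcol_r(G) ≤ c, and let A ⊆ V(G) be a set of size at least (c+1)·2^m. Then there exists a set S ⊆ V(G) of size at most c(c−1) and a set B ⊆ A of size at least m that is r-independent in G − S. -/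
section Aux

variable {V : Type*} [Fintype V] [DecidableEq V] {G : SimpleGraph V} {L : LinearOrder V} {r : ℕ}

lemma self_mem_wreach (v : V) : v ∈ WReach G L r v := by
  refine ⟨SimpleGraph.Walk.nil, SimpleGraph.Walk.IsPath.nil, by simp, ?_⟩
  intro w hw
  rw [SimpleGraph.Walk.support_nil, List.mem_singleton] at hw
  exact hw ▸ L.le_refl v

lemma le_of_mem_wreach {w v : V} (h : w ∈ WReach G L r v) : L.le w v := by
  obtain ⟨p, -, -, hm⟩ := h
  exact hm v p.start_mem_support

lemma exists_common_witness {u v : V} (p : G.Walk u v) (hr : p.length ≤ r) :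
    ∃ w ∈ p.support, w ∈ WReach G L r u ∧ w ∈ WReach G L r v := by
  letI := L
  set q := p.bypass with hqdef
  have hqp : q.IsPath := p.bypass_isPath
  have hql : q.length ≤ r := le_trans p.length_bypass_le hr
  have hne : q.support.toFinset.Nonempty :=
    ⟨u, List.mem_toFinset.mpr q.start_mem_support⟩
  set w := q.support.toFinset.min' hne with hwdef
  have hwsup : w ∈ q.support := List.mem_toFinset.mp (q.support.toFinset.min'_mem hne)
  have hmin : ∀ x ∈ q.support, w ≤ x := fun x hx =>
    q.support.toFinset.min'_le x (List.mem_toFinset.mpr hx)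
  refine ⟨w, p.support_bypass_subset hwsup, ?_, ?_⟩
  · exact ⟨q.takeUntil w hwsup, hqp.takeUntil hwsup,
      (q.length_takeUntil_le hwsup).trans hql,
      fun x hx => hmin x (q.support_takeUntil_subset hwsup hx)⟩
  · refine ⟨(q.dropUntil w hwsup).reverse, (hqp.dropUntil hwsup).reverse, ?_, ?_⟩
    · rw [SimpleGraph.Walk.length_reverse]
      exact (q.length_dropUntil_le hwsup).trans hql
    · intro x hx
      rw [SimpleGraph.Walk.support_reverse, List.mem_reverse] at hx
      exact hmin x (q.support_dropUntil_subset hwsup hx)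

open scoped Classical in
lemma main_rec (c : ℕ) (hWR : ∀ v : V, (WReach G L r v).ncard ≤ c) :
    ∀ (k : ℕ) (A S : Finset V) (t E : ℕ),
      (∀ a ∈ A, a ∉ S) →
      (∀ a ∈ A, t ≤ (S.filter (fun w => w ∈ WReach G L r a)).card) →
      ((c + 1) * 2 ^ k ≤ A.card + E) →
      (E + 2 * t ≤ 2 * c + 3) →
      (t = 0 → E ≤ 1) →
      (S.card ≤ t * (c - 1)) →
      (t ≤ c) →
      ∃ S' B : Finset V, S ⊆ S' ∧ S'.card ≤ c * (c - 1) ∧ B ⊆ A ∧ B.card = k ∧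
        (∀ b ∈ B, b ∉ S') ∧
        (∀ u ∈ B, ∀ v ∈ B, u ≠ v → ∀ w, w ∈ WReach G L r u → w ∈ WReach G L r v → w ∈ S') ∧
        (∀ w ∈ S', w ∉ S → ∃ a ∈ A, L.le w a) := by
  classical
  letI := L
  intro k
  induction k with
  | zero =>
    intro A S t E h1 h2 h3 h4 h5 h6 h7
    refine ⟨S, ∅, subset_rfl, le_trans h6 (Nat.mul_le_mul h7 le_rfl), by simp, by simp,
      by simp, by simp, fun w hw hw' => absurd hw hw'⟩
  | succ k ih =>
    intro A S t E h1 h2 h3 h4 h5 h6 h7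
    have h2k : 1 ≤ 2 ^ k := Nat.one_le_two_pow
    have hpow : (c + 1) * 2 ^ (k + 1) = 2 * ((c + 1) * 2 ^ k) := by ring
    set n := (c + 1) * 2 ^ k with hn
    have hcn : c + 1 ≤ n := by
      calc c + 1 = (c + 1) * 1 := (mul_one _).symm
        _ ≤ n := Nat.mul_le_mul le_rfl h2k
    rw [hpow] at h3
    have hE : E ≤ 2 * c + 1 := by
      rcases Nat.eq_zero_or_pos t with ht | ht
      · have := h5 ht; omega
      · omega
    have hA : A.Nonempty := by
      rw [← Finset.card_pos]; omega
    set b := A.max' hA with hbdef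
    have hbA : b ∈ A := A.max'_mem hA
    set Conf : V → Prop := fun a =>
      ∃ w, w ∈ WReach G L r a ∧ w ∈ WReach G L r b ∧ w ∉ S ∧ w ≠ b with hConf
    set N := (A.erase b).filter (fun a => ¬ Conf a) with hN
    set C := (A.erase b).filter Conf with hC
    have hNsubA : N ⊆ A := fun a ha => Finset.mem_of_mem_erase (Finset.mem_filter.mp ha).1
    have hCsubA : C ⊆ A := fun a ha => Finset.mem_of_mem_erase (Finset.mem_filter.mp ha).1
    have hNC : C.card + N.card = (A.erase b).card := by
      rw [hN, hC]
      exact Finset.card_filter_add_card_filter_not (p := Conf)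
    have herase : (A.erase b).card + 1 = A.card := Finset.card_erase_add_one hbA
    -- elements of A other than b are strictly below b
    have hlt : ∀ a ∈ A.erase b, a ≠ b ∧ L.le a b := fun a ha =>
      ⟨(Finset.mem_erase.mp ha).1, A.le_max' a (Finset.mem_of_mem_erase ha)⟩
    by_cases hgood : n ≤ N.card + (E / 2 + 1)
    · -- good case
      obtain ⟨S', B', hSS', hS'c, hB'A, hB'card, hB'S, hpair, hSup⟩ :=
        ih N S t (E / 2 + 1)
          (fun a ha => h1 a (hNsubA ha))
          (fun a ha => h2 a (hNsubA ha))
          hgood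
          (by rcases Nat.eq_zero_or_pos t with ht | ht
              · have := h5 ht; omega
              · omega)
          (fun ht => by have := h5 ht; omega)
          h6 h7
      have hbB' : b ∉ B' := by
        intro hb
        exact ((Finset.mem_erase.mp (Finset.mem_filter.mp (hB'A hb)).1).1) rfl
      have hbS' : b ∉ S' := by
        intro hb
        have hbS : b ∉ S := h1 b hbA
        obtain ⟨a, haN, hle⟩ := hSup b hb hbS
        obtain ⟨hane, haleb⟩ := hlt a (Finset.mem_filter.mp haN).1
        exact hane (le_antisymm haleb hle)
      refine ⟨S', insert b B', hSS', hS'c, ?_, ?_, ?_, ?_, ?_⟩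
      · exact Finset.insert_subset hbA (hB'A.trans hNsubA)
      · rw [Finset.card_insert_of_notMem hbB', hB'card]
      · intro x hx
        rcases Finset.mem_insert.mp hx with rfl | hx
        · exact hbS'
        · exact hB'S x hx
      · intro u hu v hv huv w hwu hwv
        have key : ∀ x ∈ B', ∀ w', w' ∈ WReach G L r b → w' ∈ WReach G L r x → w' ∈ S' := by
          intro x hx w' hw'b hw'x
          by_contra hw'S'
          have hw'S : w' ∉ S := fun h => hw'S' (hSS' h)
          have hxN := Finset.mem_filter.mp (hB'A hx)
          obtain ⟨hxne, hxleb⟩ := hlt x hxN.1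
          have hw'ne : w' ≠ b := by
            intro h
            exact hxne (le_antisymm hxleb (h ▸ le_of_mem_wreach hw'x))
          exact hxN.2 ⟨w', hw'x, hw'b, hw'S, hw'ne⟩
        rcases Finset.mem_insert.mp hu with rfl | hu <;>
          rcases Finset.mem_insert.mp hv with rfl | hv
        · exact absurd rfl huv
        · exact key v hv w hwu hwv
        · exact key u hu w hwv hwu
        · exact hpair u hu v hv huv w hwu hwv
      · intro w hw hwS
        obtain ⟨a, haN, hle⟩ := hSup w hw hwS
        exact ⟨a, hNsubA haN, hle⟩
    · -- bad case
      have hCE : n ≤ C.card + E / 2 := by omega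
      set W := Finset.univ.filter (fun w => w ∈ WReach G L r b ∧ w ∉ S ∧ w ≠ b ∧
        ∃ a ∈ C, w ∈ WReach G L r a) with hW
      have hWmem : ∀ w, w ∈ W ↔ (w ∈ WReach G L r b ∧ w ∉ S ∧ w ≠ b ∧
          ∃ a ∈ C, w ∈ WReach G L r a) := by
        intro w; rw [hW, Finset.mem_filter]; simp
      -- cardinality bound on W
      set Sb := S.filter (fun w => w ∈ WReach G L r b) with hSb
      have hSbt : t ≤ Sb.card := h2 b hbA
      have hbW : b ∉ W := fun h => ((hWmem b).mp h).2.2.1 rfl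
      have hbSb : b ∉ Sb := fun h => h1 b hbA (Finset.mem_filter.mp h).1
      have hdisj : Disjoint W Sb := by
        rw [Finset.disjoint_left]
        intro x hxW hxSb
        exact ((hWmem x).mp hxW).2.1 (Finset.mem_filter.mp hxSb).1
      set U := insert b (W ∪ Sb) with hU
      have hUsub : (U : Set V) ⊆ WReach G L r b := by
        intro x hx
        rcases Finset.mem_insert.mp hx with rfl | hx
        · exact self_mem_wreach b
        · rcases Finset.mem_union.mp hx with hx | hx
          · exact ((hWmem x).mp hx).1
          · exact (Finset.mem_filter.mp hx).2
      have hUcard : U.card = W.card + Sb.card + 1 := by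
        rw [hU, Finset.card_insert_of_notMem (by
          rw [Finset.mem_union]; push_neg; exact ⟨hbW, hbSb⟩),
          Finset.card_union_of_disjoint hdisj]
      have hUc : U.card ≤ c := by
        calc U.card = (U : Set V).ncard := (Set.ncard_coe_finset U).symm
          _ ≤ (WReach G L r b).ncard := Set.ncard_le_ncard hUsub (Set.toFinite _)
          _ ≤ c := hWR b
      have hWc : W.card + t + 1 ≤ c := by omega
      -- recurse
      have hsucc : (t + 1) * (c - 1) = t * (c - 1) + (c - 1) := Nat.succ_mul _ _
      obtain ⟨S', B', hSS', hS'c, hB'A, hB'card, hB'S, hpair, hSup⟩ :=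
        ih (C \ W) (S ∪ W) (t + 1) (E / 2 + W.card)
          (by intro a ha
              rw [Finset.mem_sdiff] at ha
              rw [Finset.mem_union]; push_neg
              exact ⟨h1 a (hCsubA ha.1), ha.2⟩)
          (by intro a ha
              rw [Finset.mem_sdiff] at ha
              obtain ⟨w, hwa, hwb, hwS, hwne⟩ := (Finset.mem_filter.mp ha.1).2
              have hwW : w ∈ W := (hWmem w).mpr ⟨hwb, hwS, hwne, a, ha.1, hwa⟩
              have hsub : insert w (S.filter (fun x => x ∈ WReach G L r a)) ⊆
                  (S ∪ W).filter (fun x => x ∈ WReach G L r a) := by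
                intro x hx
                rcases Finset.mem_insert.mp hx with rfl | hx
                · exact Finset.mem_filter.mpr ⟨Finset.mem_union_right _ hwW, hwa⟩
                · obtain ⟨hx1, hx2⟩ := Finset.mem_filter.mp hx
                  exact Finset.mem_filter.mpr ⟨Finset.mem_union_left _ hx1, hx2⟩
              calc t + 1 ≤ (S.filter (fun x => x ∈ WReach G L r a)).card + 1 :=
                    by have := h2 a (hCsubA ha.1); omega
                _ = (insert w (S.filter (fun x => x ∈ WReach G L r a))).card :=
                    (Finset.card_insert_of_notMem (fun h =>
                      hwS (Finset.mem_filter.mp h).1)).symm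
                _ ≤ _ := Finset.card_le_card hsub)
          (by have := Finset.card_le_card_sdiff_add_card (s := C) (t := W); omega)
          (by rcases Nat.eq_zero_or_pos t with ht | ht
              · have := h5 ht; omega
              · omega)
          (by omega)
          (by calc (S ∪ W).card ≤ S.card + W.card := Finset.card_union_le _ _
                _ ≤ t * (c - 1) + (c - 1) := add_le_add h6 (by omega)
                _ = (t + 1) * (c - 1) := hsucc.symm)
          (by omega)
      have hCsub' : C \ W ⊆ A.erase b := fun a ha =>
        (Finset.mem_filter.mp (Finset.mem_sdiff.mp ha).1).1
      have hbB' : b ∉ B' := by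
        intro hb
        exact (Finset.mem_erase.mp (hCsub' (hB'A hb))).1 rfl
      have hSS'' : S ⊆ S' := (Finset.subset_union_left).trans hSS'
      have hbS' : b ∉ S' := by
        intro hb
        by_cases hbSW : b ∈ S ∪ W
        · rcases Finset.mem_union.mp hbSW with h | h
          · exact h1 b hbA h
          · exact hbW h
        · obtain ⟨a, haA2, hle⟩ := hSup b hb hbSW
          obtain ⟨hane, haleb⟩ := hlt a (hCsub' haA2)
          exact hane (le_antisymm haleb hle)
      refine ⟨S', insert b B', hSS'', hS'c, ?_, ?_, ?_, ?_, ?_⟩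
      · exact Finset.insert_subset hbA (fun a ha =>
          Finset.mem_of_mem_erase (hCsub' (hB'A ha)))
      · rw [Finset.card_insert_of_notMem hbB', hB'card]
      · intro x hx
        rcases Finset.mem_insert.mp hx with rfl | hx
        · exact hbS'
        · exact hB'S x hx
      · intro u hu v hv huv w hwu hwv
        have key : ∀ x ∈ B', ∀ w', w' ∈ WReach G L r b → w' ∈ WReach G L r x → w' ∈ S' := by
          intro x hx w' hw'b hw'x
          by_contra hw'S'
          have hw'SW : w' ∉ S ∪ W := fun h => hw'S' (hSS' h)
          rw [Finset.mem_union] at hw'SW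
          push_neg at hw'SW
          have hxC : x ∈ C := (Finset.mem_sdiff.mp (hB'A hx)).1
          obtain ⟨hxne, hxleb⟩ := hlt x (hCsub' (hB'A hx))
          have hw'ne : w' ≠ b := by
            intro h
            exact hxne (le_antisymm hxleb (h ▸ le_of_mem_wreach hw'x))
          exact hw'SW.2 ((hWmem w').mpr ⟨hw'b, hw'SW.1, hw'ne, x, hxC, hw'x⟩)
        rcases Finset.mem_insert.mp hu with rfl | hu <;>
          rcases Finset.mem_insert.mp hv with rfl | hv
        · exact absurd rfl huv
        · exact key v hv w hwu hwv
        · exact key u hu w hwv hwu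
        · exact hpair u hu v hv huv w hwu hwv
      · intro w hw hwS
        by_cases hwSW : w ∈ S ∪ W
        · rcases Finset.mem_union.mp hwSW with h | h
          · exact absurd h hwS
          · obtain ⟨-, -, -, a, haC, hwa⟩ := (hWmem w).mp h
            exact ⟨a, hCsubA haC, le_of_mem_wreach hwa⟩
        · obtain ⟨a, haA2, hle⟩ := hSup w hw hwSW
          exact ⟨a, hCsubA (Finset.mem_sdiff.mp haA2).1, hle⟩

end Aux

/-- If wcol_r(G) ≤ c (witnessed by some order) and A has size at least (c+1)·2^m, then
there are S of size at most c(c-1) and B ⊆ A of size at least m that is r-independent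
in G − S. -/
theorem stmt6 {V : Type*} [Fintype V] [DecidableEq V] (G : SimpleGraph V) (r m c : ℕ)
    (hc : ∃ L : LinearOrder V, ∀ v : V, (WReach G L r v).ncard ≤ c)
    (A : Finset V) (hA : (c + 1) * 2 ^ m ≤ A.card) :
    ∃ S : Finset V, S.card ≤ c * (c - 1) ∧
      ∃ B ⊆ A, m ≤ B.card ∧ (∀ b ∈ B, b ∉ S) ∧
        ∀ u ∈ B, ∀ v ∈ B, u ≠ v → ∀ p : G.Walk u v,
          (∀ w ∈ p.support, w ∉ S) → r < p.length := by
  classical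
  obtain ⟨L, hWR⟩ := hc
  obtain ⟨S', B, hSS', hS'c, hBA, hBcard, hBS, hpair, -⟩ :=
    main_rec c hWR m A ∅ 0 0
      (by simp) (by simp) (by simpa using hA) (by omega) (by omega) (by simp) (by omega)
  refine ⟨S', hS'c, B, hBA, hBcard.ge, hBS, ?_⟩
  intro u hu v hv huv p hp
  by_contra hlen
  push_neg at hlen
  obtain ⟨w, hwsup, hwu, hwv⟩ := exists_common_witness (L := L) p hlen
  exact hp w hwsup (hpair u hu v hv huv w hwu hwv)
end

section
/- Let G be a graph, r a positive integer, and ℓ = wcol_{2r}(G). Then splitter has a winning strategy in the simple ℓ-round radius-r splitter game on G. -/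
/-- The r-ball around v in the induced subgraph of G on the vertex set s. -/
def ballIn {V : Type*} (G : SimpleGraph V) (s : Set V) (r : ℕ) (v : V) : Set V :=
  {u | u ∈ s ∧ ∃ p : G.Walk v u, (∀ w ∈ p.support, w ∈ s) ∧ p.length ≤ r}

/-- Splitter has a winning strategy in the ℓ-round radius-r splitter game played on the
induced subgraph of G on vertex set s. -/
def SplitterWins {V : Type*} (G : SimpleGraph V) (r : ℕ) : ℕ → Set V → Prop
  | 0, s => s = ∅
  | (ℓ + 1), s => s = ∅ ∨ ∀ v ∈ s, ∃ w ∈ ballIn G s r v,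
      SplitterWins G r ℓ (ballIn G s r v \ {w})

lemma self_mem_WReach {V : Type*} (G : SimpleGraph V) (L : LinearOrder V) (r : ℕ) (v : V) :
    v ∈ WReach G L r v := by
  refine ⟨SimpleGraph.Walk.nil, SimpleGraph.Walk.IsPath.nil, by simp, ?_⟩
  intro w hw
  rw [SimpleGraph.Walk.support_nil] at hw
  simp at hw
  subst hw
  exact L.le_refl _

lemma mem_ball_of_mem_support {V : Type*} (G : SimpleGraph V) (s : Set V) (r : ℕ)
    {v u x : V} (p : G.Walk v u) (hsup : ∀ w ∈ p.support, w ∈ s) (hlen : p.length ≤ r)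
    (hx : x ∈ p.support) : x ∈ ballIn G s r v := by
  classical
  refine ⟨hsup x hx, p.takeUntil x hx, ?_, le_trans (SimpleGraph.Walk.length_takeUntil_le p hx) hlen⟩
  intro w hw
  exact hsup w (SimpleGraph.Walk.support_takeUntil_subset p hx hw)

lemma min_mem_WReach {V : Type*} (G : SimpleGraph V) (L : LinearOrder V) (r : ℕ)
    (s : Set V) {v w u : V}
    (hw : w ∈ ballIn G s r v) (hu : u ∈ ballIn G s r v)
    (hmin : ∀ x ∈ ballIn G s r v, L.le w x) :
    w ∈ WReach G L (2 * r) u := by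
  obtain ⟨hws, q, hqsup, hqlen⟩ := hw
  obtain ⟨hus, p, hpsup, hplen⟩ := hu
  refine ⟨(p.reverse.append q).bypass, SimpleGraph.Walk.bypass_isPath _, ?_, ?_⟩
  · calc (p.reverse.append q).bypass.length ≤ (p.reverse.append q).length :=
        SimpleGraph.Walk.length_bypass_le _
      _ = p.length + q.length := by simp
      _ ≤ 2 * r := by omega
  · intro x hx
    have hx' : x ∈ (p.reverse.append q).support :=
      SimpleGraph.Walk.support_bypass_subset _ hx
    rw [SimpleGraph.Walk.mem_support_append_iff] at hx'
    apply hmin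
    rcases hx' with hx' | hx'
    · rw [SimpleGraph.Walk.support_reverse, List.mem_reverse] at hx'
      exact mem_ball_of_mem_support G s r p hpsup hplen hx'
    · exact mem_ball_of_mem_support G s r q hqsup hqlen hx'

lemma splitter_aux {V : Type*} [Fintype V] (G : SimpleGraph V) (L : LinearOrder V) (r : ℕ) :
    ∀ (n : ℕ) (s : Set V) (W : Finset V),
      (∀ x ∈ W, x ∉ s) →
      (∀ u ∈ s, (W : Set V) ⊆ WReach G L (2 * r) u) →
      (∀ u : V, (WReach G L (2 * r) u).ncard ≤ W.card + n) →
      SplitterWins G r n s := by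
  intro n
  induction n with
  | zero =>
    intro s W hdisj hsub hcard
    show s = ∅
    by_contra hne
    obtain ⟨u, hu⟩ := Set.nonempty_iff_ne_empty.mpr hne
    have h1 : insert u (W : Set V) ⊆ WReach G L (2 * r) u :=
      Set.insert_subset (self_mem_WReach G L (2 * r) u) (hsub u hu)
    have h2 : (insert u (W : Set V)).ncard = W.card + 1 := by
      rw [Set.ncard_insert_of_notMem (fun hmem => hdisj u (Finset.mem_coe.mp hmem) hu) (Set.toFinite _),
        Set.ncard_coe_finset]
    have h3 := Set.ncard_le_ncard h1 (Set.toFinite _)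
    have h4 := hcard u
    omega
  | succ n IH =>
    intro s W hdisj hsub hcard
    by_cases hs : s = ∅
    · exact Or.inl hs
    right
    intro v hv
    have hvB : v ∈ ballIn G s r v := by
      refine ⟨hv, SimpleGraph.Walk.nil, ?_, by simp⟩
      intro w hw
      rw [SimpleGraph.Walk.support_nil] at hw
      simp at hw
      subst hw
      exact hv
    letI := L
    obtain ⟨w, hwB, hmin⟩ :=
      Set.exists_min_image (ballIn G s r v) id (Set.toFinite _) ⟨v, hvB⟩
    have hBsub : ballIn G s r v ⊆ s := fun x hx => hx.1
    have hwW : w ∉ W := fun hmem => hdisj w hmem (hBsub hwB)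
    refine ⟨w, hwB, IH _ (insert w W) ?_ ?_ ?_⟩
    · intro x hx hxs'
      rcases Finset.mem_insert.mp hx with rfl | hx
      · exact hxs'.2 rfl
      · exact hdisj x hx (hBsub hxs'.1)
    · intro u hu x hx
      rw [Finset.coe_insert, Set.mem_insert_iff] at hx
      rcases hx with rfl | hx
      · exact min_mem_WReach G L r s hwB hu.1 hmin
      · exact hsub u (hBsub hu.1) hx
    · intro u
      rw [Finset.card_insert_of_notMem hwW]
      have := hcard u
      omega

/-- If ℓ = wcol_{2r}(G) (witnessed by an order), splitter wins the simple ℓ-round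
radius-r splitter game on G. -/
theorem stmt7 {V : Type*} [Fintype V] (G : SimpleGraph V) (r ℓ : ℕ) (hr : 0 < r)
    (h : ∃ L : LinearOrder V, ∀ v : V, (WReach G L (2 * r) v).ncard ≤ ℓ) :
    SplitterWins G r ℓ (Set.univ : Set V) := by
  obtain ⟨L, hL⟩ := h
  refine splitter_aux G L r ℓ Set.univ ∅ (by simp) (by simp) ?_
  simpa using hL
end

section
/- In the splitter game, if connector picks v in graph G_i and splitter picks w to be the L-minimum vertex of N_r^{G_i}(v), then w is weakly 2r-reachable (with respect to L restricted appropriately) in G from every vertex u ∈ N_r^{G_i}(v), where G_i is an induced subgraph of G and L is a linear order of V(G). -/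
/-- Every vertex on a witnessing walk is itself in the ball. -/
lemma mem_ballIn_of_mem_support {V : Type*} [DecidableEq V] (G : SimpleGraph V) (s : Set V)
    (r : ℕ) (v u : V) (p : G.Walk v u) (hs : ∀ w ∈ p.support, w ∈ s)
    (hl : p.length ≤ r) {x : V} (hx : x ∈ p.support) : x ∈ ballIn G s r v := by
  refine ⟨hs x hx, p.takeUntil x hx, fun y hy => hs y (p.support_takeUntil_subset hx hy),
    le_trans (SimpleGraph.Walk.length_takeUntil_le p hx) hl⟩

/-- If splitter picks w to be the L-minimum vertex of the r-ball around connector's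
choice v inside the current induced subgraph on s, then w is weakly 2r-reachable in G
from every vertex u of that ball. -/
theorem stmt8 {V : Type*} (G : SimpleGraph V) (L : LinearOrder V) (r : ℕ)
    (s : Set V) (v w : V)
    (hw : w ∈ ballIn G s r v) (hmin : ∀ u ∈ ballIn G s r v, L.le w u) :
    ∀ u ∈ ballIn G s r v, w ∈ WReach G L (2 * r) u := by
  classical
  rintro u ⟨hus, pu, hpus, hpul⟩
  obtain ⟨hws, pw, hpws, hpwl⟩ := hw
  set q : G.Walk u w := pu.reverse.append pw with hq
  have hqsupp : ∀ x ∈ q.support, x ∈ ballIn G s r v := by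
    intro x hx
    rw [hq, SimpleGraph.Walk.mem_support_append_iff] at hx
    rcases hx with hx | hx
    · rw [SimpleGraph.Walk.support_reverse, List.mem_reverse] at hx
      exact mem_ballIn_of_mem_support G s r v u pu hpus hpul hx
    · exact mem_ballIn_of_mem_support G s r v w pw hpws hpwl hx
  refine ⟨q.bypass, q.bypass_isPath, ?_, fun x hx =>
    hmin x (hqsupp x (q.support_bypass_subset hx))⟩
  calc q.bypass.length ≤ q.length := q.length_bypass_le
    _ = pu.length + pw.length := by
        rw [hq, SimpleGraph.Walk.length_append, SimpleGraph.Walk.length_reverse]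
    _ ≤ 2 * r := by omega
end

section
/- Let (T, β) be a tree decomposition of a graph G, and let H_1, …, H_s be pairwise vertex-disjoint connected subgraphs of G forming a minor model of the complete graph K_s (i.e., for all i ≠ j there is an edge of G between V(H_i) and V(H_j)). Then there exists a node t of T whose bag β(t) intersects V(H_j) for every j = 1, …, s. -/
open SimpleGraph Walk

section Helpers
variable {W : Type*} {T : SimpleGraph W}

/-- Walk in T with support in S gives reachability in the induced graph. -/
lemma reach_of_walk {S : Set W} : ∀ {u v : W} (w : T.Walk u v)
    (h : ∀ x ∈ w.support, x ∈ S),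
    (SimpleGraph.induce S T).Reachable ⟨u, h u w.start_mem_support⟩ ⟨v, h v w.end_mem_support⟩
  | u, _, Walk.nil, h => Reachable.refl _
  | u, v, Walk.cons hadj p, h => by
      have h' : ∀ x ∈ p.support, x ∈ S := fun x hx => h x (by simp [hx])
      exact Reachable.trans
        (SimpleGraph.Adj.reachable (by simpa using hadj :
          (SimpleGraph.induce S T).Adj ⟨u, h u (Walk.start_mem_support _)⟩
            ⟨_, h' _ p.start_mem_support⟩))
        (reach_of_walk p h')

/-- Reachability in an induced graph gives a walk with support in S. -/
lemma walk_of_reach {S : Set W} : ∀ {a b : ↥S} (_p : (SimpleGraph.induce S T).Walk a b),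
    ∃ w : T.Walk a.val b.val, ∀ x ∈ w.support, x ∈ S
  | a, _, Walk.nil => ⟨Walk.nil, by simpa using a.2⟩
  | a, c, Walk.cons hadj p => by
      obtain ⟨w, hw⟩ := walk_of_reach p
      exact ⟨Walk.cons (by simpa using hadj) w, by
        intro x hx
        rcases List.mem_cons.1 (by simpa using hx) with rfl | hx
        · exact a.2
        · exact hw x hx⟩

/-- Monotonicity of induced reachability. -/
lemma reach_mono {S S' : Set W} (hss : S ⊆ S') {u v : W} {hu : u ∈ S} {hv : v ∈ S}
    (h : (SimpleGraph.induce S T).Reachable ⟨u, hu⟩ ⟨v, hv⟩) :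
    (SimpleGraph.induce S' T).Reachable ⟨u, hss hu⟩ ⟨v, hss hv⟩ := by
  obtain ⟨p⟩ := h
  obtain ⟨w, hw⟩ := walk_of_reach p
  exact (reach_of_walk w (fun x hx => hss (hw x hx)))

noncomputable def tpath (hT : T.IsTree) (u v : W) : T.Walk u v :=
  (hT.existsUnique_path u v).choose

lemma tpath_isPath (hT : T.IsTree) (u v : W) : (tpath hT u v).IsPath :=
  (hT.existsUnique_path u v).choose_spec.1

lemma eq_tpath (hT : T.IsTree) {u v : W} (p : T.Walk u v) (hp : p.IsPath) :
    p = tpath hT u v :=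
  (hT.existsUnique_path u v).choose_spec.2 p hp

/-- Appending two paths overlapping only in the middle vertex is a path. -/
lemma isPath_append {G : SimpleGraph W} : ∀ {a m c : W} (p : G.Walk a m) (q : G.Walk m c),
    p.IsPath → q.IsPath → (∀ x, x ∈ p.support → x ∈ q.support → x = m) →
    (p.append q).IsPath
  | _, _, _, Walk.nil, q, _, hq, _ => by simpa using hq
  | a, m, c, Walk.cons h p, q, hp, hq, hcap => by
      rw [Walk.cons_append]
      refine Walk.IsPath.cons (isPath_append p q hp.of_cons hq
        (fun x hx hx' => hcap x (by simp [hx]) hx')) ?_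
      rw [Walk.support_append, List.mem_append]
      rintro (ha | ha)
      · exact ((Walk.cons_isPath_iff _ _).1 hp).2 ha
      · have : a ∈ q.support := List.mem_of_mem_tail ha
        have ham := hcap a (by simp) this
        subst ham
        have := hq.support_nodup
        rw [q.support_eq_cons, List.nodup_cons] at this
        exact this.1 ha

/-- First vertex of a walk lying in a set `S` containing the endpoint. -/
lemma firstHit {G : SimpleGraph W} {S : Set W} :
    ∀ {a b : W} (w : G.Walk a b), b ∈ S →
    ∃ (m : W) (hm : m ∈ S) (w₁ : G.Walk a m) (w₂ : G.Walk m b),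
      w = w₁.append w₂ ∧ ∀ x ∈ w₁.support, x ∈ S → x = m
  | a, _, Walk.nil, hb => ⟨a, hb, Walk.nil, Walk.nil, rfl, by simp⟩
  | a, b, Walk.cons h w, hb => by
      by_cases ha : a ∈ S
      · exact ⟨a, ha, Walk.nil, Walk.cons h w, rfl, by simp⟩
      · obtain ⟨m, hm, w₁, w₂, hw, hfirst⟩ := firstHit w hb
        refine ⟨m, hm, Walk.cons h w₁, w₂, by rw [Walk.cons_append, hw], ?_⟩
        intro x hx hxS
        rcases List.mem_cons.1 (by simpa using hx) with rfl | hx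
        · exact absurd hxS ha
        · exact hfirst x hx hxS

/-- Median of three vertices in a tree. -/
lemma median (hT : T.IsTree) (a b c : W) :
    ∃ m, m ∈ (tpath hT a b).support ∧ m ∈ (tpath hT b c).support ∧
      m ∈ (tpath hT a c).support := by
  classical
  obtain ⟨m, hm, w₁, w₂, hw, hfirst⟩ :=
    firstHit (S := {x | x ∈ (tpath hT b c).support}) (tpath hT a b)
      (tpath hT b c).start_mem_support
  have hw₁ : w₁.IsPath := by
    have := tpath_isPath hT a b; rw [hw] at this; exact this.of_append_left
  have hq : ((tpath hT b c).dropUntil m hm).IsPath := (tpath_isPath hT b c).dropUntil hm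
  have hpac : (w₁.append ((tpath hT b c).dropUntil m hm)).IsPath := by
    refine isPath_append _ _ hw₁ hq ?_
    intro x hx hx'
    exact hfirst x hx (Walk.support_dropUntil_subset _ hm hx')
  refine ⟨m, ?_, hm, ?_⟩
  · rw [hw, Walk.support_append]
    exact List.mem_append.2 (Or.inl w₁.end_mem_support)
  · rw [← eq_tpath hT _ hpac, Walk.support_append]
    exact List.mem_append.2 (Or.inl w₁.end_mem_support)

/-- The unique path between vertices of a connected induced set stays in the set. -/
lemma tpath_support_subset (hT : T.IsTree) {S : Set W}
    (hS : (SimpleGraph.induce S T).Connected) {u v : W} (hu : u ∈ S) (hv : v ∈ S) :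
    ∀ x ∈ (tpath hT u v).support, x ∈ S := by
  classical
  obtain ⟨p⟩ := hS.preconnected ⟨u, hu⟩ ⟨v, hv⟩
  obtain ⟨w, hw⟩ := walk_of_reach p
  have : w.bypass = tpath hT u v := eq_tpath hT _ w.bypass_isPath
  rw [← this]
  exact fun x hx => hw x (w.support_bypass_subset hx)

/-- Intersection of two connected induced subsets of a tree is connected. -/
lemma inter_connected (hT : T.IsTree) {S₁ S₂ : Set W}
    (h1 : (SimpleGraph.induce S₁ T).Connected) (h2 : (SimpleGraph.induce S₂ T).Connected)
    (hne : (S₁ ∩ S₂).Nonempty) : (SimpleGraph.induce (S₁ ∩ S₂) T).Connected := by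
  rw [SimpleGraph.connected_iff]
  refine ⟨?_, ⟨⟨hne.choose, hne.choose_spec⟩⟩⟩
  rintro ⟨u, hu1, hu2⟩ ⟨v, hv1, hv2⟩
  exact reach_of_walk (S := S₁ ∩ S₂) (tpath hT u v)
    (fun x hx => ⟨tpath_support_subset hT h1 hu1 hv1 x hx,
      tpath_support_subset hT h2 hu2 hv2 x hx⟩)

/-- Three pairwise intersecting connected induced subsets of a tree meet. -/
lemma triple_inter (hT : T.IsTree) {S₁ S₂ S₃ : Set W}
    (h1 : (SimpleGraph.induce S₁ T).Connected) (h2 : (SimpleGraph.induce S₂ T).Connected)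
    (h3 : (SimpleGraph.induce S₃ T).Connected)
    (h12 : (S₁ ∩ S₂).Nonempty) (h13 : (S₁ ∩ S₃).Nonempty) (h23 : (S₂ ∩ S₃).Nonempty) :
    (S₁ ∩ S₂ ∩ S₃).Nonempty := by
  obtain ⟨a, ha1, ha2⟩ := h12
  obtain ⟨b, hb1, hb3⟩ := h13
  obtain ⟨c, hc2, hc3⟩ := h23
  obtain ⟨m, hmab, hmbc, hmac⟩ := median hT a b c
  exact ⟨m, ⟨tpath_support_subset hT h1 ha1 hb1 m hmab,
    tpath_support_subset hT h2 ha2 hc2 m hmac⟩,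
    tpath_support_subset hT h3 hb3 hc3 m hmbc⟩

/-- Helly property for subtrees of a tree. -/
lemma helly (hT : T.IsTree) : ∀ (n : ℕ) (F : Fin n → Set W),
    (∀ i, (SimpleGraph.induce (F i) T).Connected) →
    (∀ i j, (F i ∩ F j).Nonempty) → ∃ t, ∀ i, t ∈ F i := by
  intro n
  induction n with
  | zero =>
      intro F _ _
      obtain ⟨t⟩ := hT.isConnected.nonempty
      exact ⟨t, fun i => i.elim0⟩
  | succ n ih =>
      match n with
      | 0 =>
          intro F hc hp
          obtain ⟨t, ht⟩ := hp 0 0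
          exact ⟨t, fun i => by
            have : i = 0 := Fin.ext (by omega)
            rw [this]; exact ht.1⟩
      | Nat.succ n =>
          intro F hc hp
          have hnn1 : (⟨n, by omega⟩ : Fin (n+2)) ≠ ⟨n+1, by omega⟩ := by
            intro h; exact absurd (Fin.mk.injEq .. ▸ h) (by simp)
          set F' : Fin (n+1) → Set W := fun i =>
            if (i : ℕ) < n then F ⟨(i : ℕ), Nat.lt_succ_of_lt i.isLt⟩
            else F ⟨n, by omega⟩ ∩ F ⟨n+1, by omega⟩ with hF'
          have htri : ∀ k : Fin (n+2), (F k ∩ (F ⟨n, by omega⟩ ∩ F ⟨n+1, by omega⟩)).Nonempty := by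
            intro k
            have := triple_inter hT (hc k) (hc ⟨n, by omega⟩)
              (hc ⟨n+1, by omega⟩) (hp _ _) (hp _ _) (hp _ _)
            rwa [Set.inter_assoc] at this
          have hF'c : ∀ i, (SimpleGraph.induce (F' i) T).Connected := by
            intro i
            rw [hF']
            dsimp only
            by_cases h : (i : ℕ) < n
            · rw [if_pos h]; exact hc _
            · rw [if_neg h]; exact inter_connected hT (hc _) (hc _) (hp _ _)
          have hF'p : ∀ i j, (F' i ∩ F' j).Nonempty := by
            intro i j
            rw [hF']
            dsimp only
            by_cases h : (i : ℕ) < n <;> by_cases h' : (j : ℕ) < n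
            · rw [if_pos h, if_pos h']; exact hp _ _
            · rw [if_pos h, if_neg h']; exact htri _
            · rw [if_neg h, if_pos h']; rw [Set.inter_comm]; exact htri _
            · rw [if_neg h, if_neg h', Set.inter_self]; exact hp _ _
          obtain ⟨t, ht⟩ := ih F' hF'c hF'p
          have hlast : t ∈ F ⟨n, by omega⟩ ∩ F ⟨n+1, by omega⟩ := by
            have := ht ⟨n, by omega⟩
            rw [hF'] at this
            dsimp only at this
            rwa [if_neg (by simp)] at this
          refine ⟨t, fun i => ?_⟩
          rcases lt_trichotomy (i : ℕ) n with h | h | h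
          · have := ht ⟨(i : ℕ), by omega⟩
            rw [hF'] at this
            dsimp only at this
            rw [if_pos (by simpa using h)] at this
            exact this
          · have hi : i = ⟨n, by omega⟩ := Fin.ext (by simpa using h)
            rw [hi]; exact hlast.1
          · have hi : i = ⟨n+1, by omega⟩ := Fin.ext (by simp only []; omega)
            rw [hi]; exact hlast.2

end Helpers

/-- A tree decomposition of G with tree T and bags `bag`. -/
structure TreeDecomp {V W : Type*} (G : SimpleGraph V) (T : SimpleGraph W) where
  bag : W → Set V
  isTree : T.IsTree
  bags_connected : ∀ v : V, (SimpleGraph.induce {t : W | v ∈ bag t} T).Connected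
  edge_in_bag : ∀ ⦃u v : V⦄, G.Adj u v → ∃ t : W, u ∈ bag t ∧ v ∈ bag t

/-- Bags containing a fixed vertex are connected and contained in the set of bags
meeting `A`; transfer reachability. -/
lemma bag_reach {V W : Type*} {G : SimpleGraph V} {T : SimpleGraph W}
    (D : TreeDecomp G T) (A : Set V) {v : V} (hv : v ∈ A) {t₁ t₂ : W}
    (h₁ : v ∈ D.bag t₁) (h₂ : v ∈ D.bag t₂) :
    (SimpleGraph.induce {t : W | (D.bag t ∩ A).Nonempty} T).Reachable
      ⟨t₁, ⟨v, h₁, hv⟩⟩ ⟨t₂, ⟨v, h₂, hv⟩⟩ := by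
  have hr := (D.bags_connected v).preconnected ⟨t₁, h₁⟩ ⟨t₂, h₂⟩
  have hss : {t : W | v ∈ D.bag t} ⊆ {t : W | (D.bag t ∩ A).Nonempty} :=
    fun t ht => ⟨v, ht, hv⟩
  exact reach_mono hss hr

/-- Walking through a connected branch set, the bags meeting it are connected. -/
lemma key {V W : Type*} {G : SimpleGraph V} {T : SimpleGraph W}
    (D : TreeDecomp G T) (A : Set V) :
    ∀ {x y : ↥A} (_p : (SimpleGraph.induce A G).Walk x y) {t₁ t₂ : W}
      (h₁ : x.val ∈ D.bag t₁) (h₂ : y.val ∈ D.bag t₂),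
      (SimpleGraph.induce {t : W | (D.bag t ∩ A).Nonempty} T).Reachable
        ⟨t₁, ⟨x.val, h₁, x.2⟩⟩ ⟨t₂, ⟨y.val, h₂, y.2⟩⟩
  | x, _, SimpleGraph.Walk.nil, t₁, t₂, h₁, h₂ => bag_reach D A x.2 h₁ h₂
  | x, y, SimpleGraph.Walk.cons hadj p, t₁, t₂, h₁, h₂ => by
      rename_i z
      have hGadj : G.Adj x.val z.val := by simpa using hadj
      obtain ⟨t, hxt, hzt⟩ := D.edge_in_bag hGadj
      exact (bag_reach D A x.2 h₁ hxt).trans (key D A p hzt h₂)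

/-- For a minor model of K_s in G, some bag of the tree decomposition meets every
branch set. -/
theorem stmt12 {V W : Type*} (G : SimpleGraph V) (T : SimpleGraph W)
    (D : TreeDecomp G T) (s : ℕ) (H : Fin s → Set V)
    (hdisj : ∀ i j, i ≠ j → Disjoint (H i) (H j))
    (hconn : ∀ i, (SimpleGraph.induce (H i) G).Connected)
    (hadj : ∀ i j, i ≠ j → ∃ u ∈ H i, ∃ v ∈ H j, G.Adj u v) :
    ∃ t : W, ∀ j, (D.bag t ∩ H j).Nonempty := by
  classical
  set B : Fin s → Set W := fun i => {t : W | (D.bag t ∩ H i).Nonempty} with hB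
  have hBne : ∀ i, (B i).Nonempty := by
    intro i
    obtain ⟨⟨v, hv⟩⟩ := (hconn i).nonempty
    obtain ⟨⟨t, ht⟩⟩ := (D.bags_connected v).nonempty
    exact ⟨t, ⟨v, ht, hv⟩⟩
  have hBconn : ∀ i, (SimpleGraph.induce (B i) T).Connected := by
    intro i
    rw [SimpleGraph.connected_iff]
    refine ⟨?_, ⟨⟨(hBne i).choose, (hBne i).choose_spec⟩⟩⟩
    rintro ⟨t₁, v₁, hv₁, hH₁⟩ ⟨t₂, v₂, hv₂, hH₂⟩
    obtain ⟨p⟩ := (hconn i).preconnected ⟨v₁, hH₁⟩ ⟨v₂, hH₂⟩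
    exact key D (H i) p hv₁ hv₂
  have hBpair : ∀ i j, (B i ∩ B j).Nonempty := by
    intro i j
    by_cases hij : i = j
    · subst hij; rw [Set.inter_self]; exact hBne i
    · obtain ⟨u, hu, v, hv, huv⟩ := hadj i j hij
      obtain ⟨t, hut, hvt⟩ := D.edge_in_bag huv
      exact ⟨t, ⟨u, hut, hu⟩, ⟨v, hvt, hv⟩⟩
  obtain ⟨t, ht⟩ := helly D.isTree s B hBconn hBpair
  exact ⟨t, fun j => ht j⟩
end

section
/- Let t be a node of a tree decomposition (T, β) of G whose bag intersects every branch set of a minor model H_1, …, H_s of K_s in G. Then the subgraphs of the torso τ(t) induced by V(H_j) ∩ β(t), for j = 1, …, s, are connected in τ(t) and form a minor model of K_s in τ(t); in particular K_s is a minor of τ(t). -/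
/-- The torso of the tree decomposition at node t: the induced subgraph on β(t)
together with a clique on each adhesion set β(t) ∩ β(t') for neighbours t' of t. -/
def torso {V W : Type*} (G : SimpleGraph V) (T : SimpleGraph W)
    (D : TreeDecomp G T) (t : W) : SimpleGraph V where
  Adj u v := u ≠ v ∧ u ∈ D.bag t ∧ v ∈ D.bag t ∧
    (G.Adj u v ∨ ∃ t' : W, T.Adj t t' ∧ u ∈ D.bag t' ∧ v ∈ D.bag t')
  symm := by
    constructor
    rintro u v ⟨h1, h2, h3, h4⟩
    exact ⟨h1.symm, h3, h2,
      h4.imp (fun h => h.symm) (fun ⟨t', ha, hb, hc⟩ => ⟨t', ha, hc, hb⟩)⟩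
  loopless := by constructor; rintro v ⟨h, -⟩; exact h rfl

open SimpleGraph

section Aux

variable {V W : Type*} {G : SimpleGraph V} {T : SimpleGraph W}

/-- From reachability in an induced subgraph, extract a walk in the ambient graph
whose support stays in the set. -/
lemma walk_of_induce_reachable {S : Set V} {u v : V} (hu : u ∈ S) (hv : v ∈ S)
    (h : (SimpleGraph.induce S G).Reachable ⟨u, hu⟩ ⟨v, hv⟩) :
    ∃ p : G.Walk u v, ∀ x ∈ p.support, x ∈ S := by
  obtain ⟨q⟩ := h
  refine ⟨q.map (SimpleGraph.Embedding.induce S).toHom, ?_⟩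
  intro x hx
  have hx' : x ∈ (q.map (SimpleGraph.Embedding.induce S).toHom).support := hx
  rw [SimpleGraph.Walk.support_map] at hx'
  obtain ⟨⟨y, hy⟩, -, rfl⟩ := List.mem_map.1 hx'
  exact hy

/-- A walk with support in a set gives reachability in the induced subgraph. -/
lemma induce_reachable_of_walk {S : Set V} : ∀ {u v : V} (p : G.Walk u v)
    (hp : ∀ x ∈ p.support, x ∈ S) (hu : u ∈ S) (hv : v ∈ S),
    (SimpleGraph.induce S G).Reachable ⟨u, hu⟩ ⟨v, hv⟩ := by
  intro u v p
  induction p with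
  | nil => intro _ _ _; rfl
  | @cons a b c h q ih =>
    intro hp ha hc
    have hb : b ∈ S := hp b (by simp [SimpleGraph.Walk.support_cons])
    have h1 : (SimpleGraph.induce S G).Adj ⟨a, ha⟩ ⟨b, hb⟩ := h
    exact (h1.reachable).trans
      (ih (fun x hx => hp x (by simp [SimpleGraph.Walk.support_cons, hx])) hb hc)

/-- Reachability in T avoiding the vertex t. -/
def AReach (T : SimpleGraph W) (t a b : W) : Prop :=
  ∃ p : T.Walk a b, t ∉ p.support

lemma AReach.trans {t a b c : W} (h1 : AReach T t a b) (h2 : AReach T t b c) :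
    AReach T t a c := by
  obtain ⟨p, hp⟩ := h1; obtain ⟨q, hq⟩ := h2
  exact ⟨p.append q, fun hm =>
    ((SimpleGraph.Walk.mem_support_append_iff p q).1 hm).elim hp hq⟩

/-- A walk between two bags containing x stays inside the bags of x. -/
lemma bags_walk (D : TreeDecomp G T) {x : V} {r₁ r₂ : W}
    (h1 : x ∈ D.bag r₁) (h2 : x ∈ D.bag r₂) :
    ∃ p : T.Walk r₁ r₂, ∀ w ∈ p.support, x ∈ D.bag w :=
  walk_of_induce_reachable h1 h2 ((D.bags_connected x).preconnected _ _)

lemma bags_areach (D : TreeDecomp G T) {t : W} {x : V} {r₁ r₂ : W}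
    (hx : x ∉ D.bag t) (h1 : x ∈ D.bag r₁) (h2 : x ∈ D.bag r₂) :
    AReach T t r₁ r₂ := by
  obtain ⟨p, hp⟩ := bags_walk D h1 h2
  exact ⟨p, fun hm => hx (hp t hm)⟩

/-- In a tree, two neighbours of t connected while avoiding t coincide. -/
lemma neighbor_unique (hT : T.IsTree) {t t₀ t₁ : W} (h0 : T.Adj t t₀) (h1 : T.Adj t t₁)
    (h : AReach T t t₀ t₁) : t₀ = t₁ := by
  classical
  obtain ⟨p, hp⟩ := h
  have htq : t ∉ (p.toPath : T.Walk t₀ t₁).support :=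
    fun hmem => hp (SimpleGraph.Walk.support_toPath_subset p hmem)
  have hpath1 : (SimpleGraph.Walk.cons h0 (p.toPath : T.Walk t₀ t₁)).IsPath :=
    (SimpleGraph.Walk.cons_isPath_iff _ _).2 ⟨p.toPath.2, htq⟩
  have hpath2 : (SimpleGraph.Walk.cons h1 SimpleGraph.Walk.nil).IsPath := by
    simp [SimpleGraph.Walk.cons_isPath_iff, h1.ne]
  have heq := ((hT.existsUnique_path t t₁).unique hpath1 hpath2)
  have hlen := congrArg SimpleGraph.Walk.length heq
  simp only [SimpleGraph.Walk.length_cons, SimpleGraph.Walk.length_nil,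
    add_eq_right, Nat.succ_eq_add_one, Nat.add_right_cancel_iff] at hlen
  exact SimpleGraph.Walk.eq_of_length_eq_zero hlen

/-- If u lies in the bags of both t and r ≠ t, then u lies in the bag of a neighbour
t₀ of t lying on the t-side towards r. -/
lemma step_to_neighbor (D : TreeDecomp G T) {t r : W} {u : V}
    (hu : u ∈ D.bag t) (hur : u ∈ D.bag r) (hrt : r ≠ t) :
    ∃ t₀, T.Adj t t₀ ∧ u ∈ D.bag t₀ ∧ AReach T t t₀ r := by
  classical
  obtain ⟨p, hp⟩ := bags_walk D hu hur
  have hsupp : ∀ w ∈ (p.toPath : T.Walk t r).support, u ∈ D.bag w :=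
    fun w hw => hp w (SimpleGraph.Walk.support_toPath_subset p hw)
  have hpath := p.toPath.2
  obtain ⟨t₀, hadj, rest, hrest⟩ :=
    SimpleGraph.Walk.exists_eq_cons_of_ne hrt.symm (p.toPath : T.Walk t r)
  rw [hrest] at hsupp hpath
  have hnp := (SimpleGraph.Walk.cons_isPath_iff _ _).1 hpath
  exact ⟨t₀, hadj, hsupp t₀ (by simp [SimpleGraph.Walk.support_cons]),
    ⟨rest, hnp.2⟩⟩

lemma mem_bag_neighbor (D : TreeDecomp G T) (hT : T.IsTree) {t t₀ r : W} {u : V}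
    (h0 : T.Adj t t₀) (hu : u ∈ D.bag t) (hur : u ∈ D.bag r)
    (hr : AReach T t t₀ r) : u ∈ D.bag t₀ := by
  have hrt : r ≠ t := by
    rintro rfl
    obtain ⟨p, hp⟩ := hr
    exact hp p.end_mem_support
  obtain ⟨t₁, h1, hu1, hr1⟩ := step_to_neighbor D hu hur hrt
  have : t₀ = t₁ := neighbor_unique hT h0 h1 (hr.trans ⟨(hr1.choose).reverse, by
    rw [SimpleGraph.Walk.support_reverse]; simpa using hr1.choose_spec⟩)
  exact this ▸ hu1

/-- Jump lemma: walking from outside the bag of t back into it lands in the bag of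
the neighbour t₀ determining the component where we started. -/
lemma jump (D : TreeDecomp G T) (hT : T.IsTree) {t t₀ : W} (h0 : T.Adj t t₀) :
    ∀ {x v : V} (p : G.Walk x v), x ∉ D.bag t → v ∈ D.bag t →
    (∃ r, x ∈ D.bag r ∧ AReach T t t₀ r) →
    ∃ w, w ∈ D.bag t ∧ w ∈ D.bag t₀ ∧
      ∃ p₂ : G.Walk w v, (∀ y ∈ p₂.support, y ∈ p.support) ∧ p₂.length < p.length := by
  intro x v p
  induction p with
  | nil => intro hx hv _; exact absurd hv hx
  | @cons a b c h q ih =>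
    intro hx hv hcomp
    obtain ⟨r, hxr, hr⟩ := hcomp
    obtain ⟨r', hxr', hbr'⟩ := D.edge_in_bag h
    have hr' : AReach T t t₀ r' := hr.trans (bags_areach D hx hxr hxr')
    by_cases hb : b ∈ D.bag t
    · refine ⟨b, hb, mem_bag_neighbor D hT h0 hb hbr' hr', q, ?_, ?_⟩
      · intro y hy; simp [SimpleGraph.Walk.support_cons, hy]
      · simp [SimpleGraph.Walk.length_cons]
    · obtain ⟨w, hw, hw0, p₂, hsub, hlen⟩ := ih hb hv ⟨r', hbr', hr'⟩
      refine ⟨w, hw, hw0, p₂, ?_, ?_⟩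
      · intro y hy; simp [SimpleGraph.Walk.support_cons, hsub y hy]
      · simp only [SimpleGraph.Walk.length_cons]; omega

/-- Main lemma: a G-walk between two vertices of the bag of t yields a torso walk
whose support lies in the original support intersected with the bag. -/
lemma torso_walk (D : TreeDecomp G T) (t : W) :
    ∀ (n : ℕ) {u v : V} (p : G.Walk u v), p.length ≤ n → u ∈ D.bag t → v ∈ D.bag t →
    ∃ q : (torso G T D t).Walk u v, ∀ x ∈ q.support, x ∈ p.support ∧ x ∈ D.bag t := by
  intro n
  induction n with
  | zero =>
    intro u v p hlen hu hv
    obtain rfl := SimpleGraph.Walk.eq_of_length_eq_zero (Nat.le_zero.mp hlen)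
    exact ⟨SimpleGraph.Walk.nil, by
      intro x hx
      simp only [SimpleGraph.Walk.support_nil, List.mem_singleton] at hx
      exact ⟨hx ▸ p.start_mem_support, hx ▸ hu⟩⟩
  | succ n ih =>
    intro u v p hlen hu hv
    cases p with
    | nil =>
      exact ⟨SimpleGraph.Walk.nil, by
        intro x hx
        simp only [SimpleGraph.Walk.support_nil, List.mem_singleton] at hx
        subst hx; exact ⟨SimpleGraph.Walk.start_mem_support _, hu⟩⟩
    | @cons _ b _ h q =>
      have hqlen : q.length ≤ n := by
        simpa [SimpleGraph.Walk.length_cons] using hlen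
      by_cases hb : b ∈ D.bag t
      · obtain ⟨q', hq'⟩ := ih q hqlen hb hv
        have hadjt : (torso G T D t).Adj u b := ⟨h.ne, hu, hb, Or.inl h⟩
        refine ⟨SimpleGraph.Walk.cons hadjt q', ?_⟩
        intro x hx
        rw [SimpleGraph.Walk.support_cons, List.mem_cons] at hx
        rcases hx with rfl | hx
        · exact ⟨(SimpleGraph.Walk.cons h q).start_mem_support, hu⟩
        · obtain ⟨h1, h2⟩ := hq' x hx
          exact ⟨by simp [SimpleGraph.Walk.support_cons, h1], h2⟩
      · obtain ⟨r, hur, hbr⟩ := D.edge_in_bag h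
        have hrt : r ≠ t := fun e => hb (e ▸ hbr)
        obtain ⟨t₀, h0, hu0, hr0⟩ := step_to_neighbor D hu hur hrt
        obtain ⟨w, hw, hw0, p₂, hsub, hlen₂⟩ := jump D D.isTree h0 q hb hv ⟨r, hbr, hr0⟩
        obtain ⟨q', hq'⟩ := ih p₂ (by omega) hw hv
        have hsubcons : ∀ y ∈ p₂.support, y ∈ (SimpleGraph.Walk.cons h q).support := by
          intro y hy
          simp [SimpleGraph.Walk.support_cons, hsub y hy]
        by_cases huw : u = w
        · subst huw
          exact ⟨q', fun x hx => ⟨hsubcons x (hq' x hx).1, (hq' x hx).2⟩⟩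
        · have hadjt : (torso G T D t).Adj u w := ⟨huw, hu, hw, Or.inr ⟨t₀, h0, hu0, hw0⟩⟩
          refine ⟨SimpleGraph.Walk.cons hadjt q', ?_⟩
          intro x hx
          rw [SimpleGraph.Walk.support_cons, List.mem_cons] at hx
          rcases hx with rfl | hx
          · exact ⟨(SimpleGraph.Walk.cons h q).start_mem_support, hu⟩
          · exact ⟨hsubcons x (hq' x hx).1, (hq' x hx).2⟩

/-- A walk from A to B through A ∪ B with A, B disjoint contains a crossing edge. -/
lemma crossing {G' : SimpleGraph V} {A B : Set V} (hAB : Disjoint A B) :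
    ∀ {a b : V} (p : G'.Walk a b), a ∈ A → b ∈ B → (∀ x ∈ p.support, x ∈ A ∪ B) →
    ∃ u ∈ A, ∃ w ∈ B, G'.Adj u w := by
  intro a b p
  induction p with
  | nil => intro ha hb _; exact absurd hb (Set.disjoint_left.1 hAB ha)
  | @cons a c b h q ih =>
    intro ha hb hsup
    rcases hsup c (by simp [SimpleGraph.Walk.support_cons]) with hc | hc
    · exact ih hc hb (fun x hx => hsup x (by simp [SimpleGraph.Walk.support_cons, hx]))
    · exact ⟨a, ha, c, hc, h⟩

end Aux

/-- If the bag at t meets every branch set of a minor model of K_s in G, then the sets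
V(H_j) ∩ β(t) induce connected subgraphs of the torso at t and form a minor model of
K_s in the torso. -/
theorem stmt15 {V W : Type*} (G : SimpleGraph V) (T : SimpleGraph W)
    (D : TreeDecomp G T) (s : ℕ) (H : Fin s → Set V)
    (hdisj : ∀ i j, i ≠ j → Disjoint (H i) (H j))
    (hconn : ∀ i, (SimpleGraph.induce (H i) G).Connected)
    (hadj : ∀ i j, i ≠ j → ∃ u ∈ H i, ∃ v ∈ H j, G.Adj u v)
    (t : W) (ht : ∀ j, (D.bag t ∩ H j).Nonempty) :
    (∀ j, (SimpleGraph.induce (H j ∩ D.bag t) (torso G T D t)).Connected) ∧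
    (∀ i j, i ≠ j →
      ∃ u ∈ H i ∩ D.bag t, ∃ w ∈ H j ∩ D.bag t, (torso G T D t).Adj u w) := by
  constructor
  · intro j
    obtain ⟨a, haB, haH⟩ := ht j
    have hne : Nonempty ↥(H j ∩ D.bag t) := ⟨⟨a, haH, haB⟩⟩
    refine SimpleGraph.Connected.mk ?_
    rintro ⟨x, hxH, hxB⟩ ⟨y, hyH, hyB⟩
    obtain ⟨p, hp⟩ := walk_of_induce_reachable hxH hyH ((hconn j).preconnected _ _)
    obtain ⟨q, hq⟩ := torso_walk D t p.length p le_rfl hxB hyB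
    exact induce_reachable_of_walk (S := H j ∩ D.bag t) q
      (fun z hz => ⟨hp z (hq z hz).1, (hq z hz).2⟩) ⟨hxH, hxB⟩ ⟨hyH, hyB⟩
  · intro i j hij
    obtain ⟨a, haB, haH⟩ := ht i
    obtain ⟨b, hbB, hbH⟩ := ht j
    obtain ⟨u', hu', v', hv', hG⟩ := hadj i j hij
    obtain ⟨p₁, hp₁⟩ := walk_of_induce_reachable haH hu' ((hconn i).preconnected _ _)
    obtain ⟨p₂, hp₂⟩ := walk_of_induce_reachable hv' hbH ((hconn j).preconnected _ _)
    set p : G.Walk a b := p₁.append (SimpleGraph.Walk.cons hG p₂) with hp_def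
    have hpsup : ∀ x ∈ p.support, x ∈ H i ∪ H j := by
      intro x hx
      rcases (SimpleGraph.Walk.mem_support_append_iff _ _).1 hx with hx | hx
      · exact Or.inl (hp₁ x hx)
      · rw [SimpleGraph.Walk.support_cons, List.mem_cons] at hx
        rcases hx with rfl | hx
        · exact Or.inl hu'
        · exact Or.inr (hp₂ x hx)
    obtain ⟨q, hq⟩ := torso_walk D t p.length p le_rfl haB hbB
    have hdisj' : Disjoint (H i ∩ D.bag t) (H j ∩ D.bag t) :=
      ((hdisj i j hij).mono Set.inter_subset_left Set.inter_subset_left)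
    exact crossing hdisj' q ⟨haH, haB⟩ ⟨hbH, hbB⟩
      (fun x hx => by
        rcases hpsup x (hq x hx).1 with h | h
        · exact Or.inl ⟨h, (hq x hx).2⟩
        · exact Or.inr ⟨h, (hq x hx).2⟩)
end

section
/- Let G be a graph, L a linear order on V(G), and H the auxiliary graph on V(G) with an edge uv whenever u ∈ WReach_r[G,L,v] or v ∈ WReach_r[G,L,u]. If |WReach_r[G,L,v]| ≤ c for all v, then H is c-degenerate; consequently every set A ⊆ V(G) contains a subset I of size at least |A|/(c+1) with WReach_r[G,L,v] ∩ I = {v} for every v ∈ I. -/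
/-- The auxiliary graph on V(G) with an edge uv whenever u is weakly r-reachable from
v or vice versa. -/
def WReachGraph {V : Type*} (G : SimpleGraph V) (L : LinearOrder V) (r : ℕ) :
    SimpleGraph V where
  Adj u v := u ≠ v ∧ (u ∈ WReach G L r v ∨ v ∈ WReach G L r u)
  symm := ⟨by rintro u v ⟨h1, h2⟩; exact ⟨h1.symm, h2.symm⟩⟩
  loopless := ⟨by rintro v ⟨h, -⟩; exact h rfl⟩

/-- Key degeneracy step: the L-maximum of A has at most c neighbors in A. -/
lemma WReach_min_step {V : Type*} [Fintype V] (G : SimpleGraph V)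
    (L : LinearOrder V) (r c : ℕ) (hc : ∀ v : V, (WReach G L r v).ncard ≤ c)
    (A : Finset V) (hA : A.Nonempty) :
    ∃ v ∈ A, {u | (WReachGraph G L r).Adj v u ∧ u ∈ A}.ncard ≤ c := by
  letI : LinearOrder V := L
  refine ⟨A.max' hA, A.max'_mem hA, ?_⟩
  set v := A.max' hA with hv
  have hsub : {u | (WReachGraph G L r).Adj v u ∧ u ∈ A} ⊆ WReach G L r v := by
    rintro u ⟨⟨hne, hor⟩, huA⟩
    rcases hor with h | h
    · -- v ∈ WReach u : then v ≤ u, but u ≤ v since v is max, contradiction with v ≠ u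
      obtain ⟨p, -, -, hle⟩ := h
      have h1 : L.le v u := hle u p.start_mem_support
      have h2 : L.le u v := A.le_max' u huA
      exact absurd (le_antisymm h2 h1) (Ne.symm hne)
    · exact h
  calc {u | (WReachGraph G L r).Adj v u ∧ u ∈ A}.ncard
      ≤ (WReach G L r v).ncard := Set.ncard_le_ncard hsub (Set.toFinite _)
    _ ≤ c := hc v

/-- If every vertex weakly r-reaches at most c vertices, the auxiliary graph is
c-degenerate; consequently every A contains a subset I of size at least |A|/(c+1) with
WReach_r[G,L,v] ∩ I = {v} for every v ∈ I. -/
theorem stmt19 {V : Type*} [Fintype V] [DecidableEq V] (G : SimpleGraph V)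
    (L : LinearOrder V) (r c : ℕ)
    (hc : ∀ v : V, (WReach G L r v).ncard ≤ c) :
    (∀ A : Finset V, A.Nonempty →
      ∃ v ∈ A, {u | (WReachGraph G L r).Adj v u ∧ u ∈ A}.ncard ≤ c) ∧
    (∀ A : Finset V, ∃ I ⊆ A, (A.card : ℝ) / (c + 1) ≤ I.card ∧
      ∀ v ∈ I, WReach G L r v ∩ ↑I = {v}) := by
  classical
  refine ⟨fun A hA => WReach_min_step G L r c hc A hA, ?_⟩
  -- first: independent set version, by strong induction on card
  have main : ∀ n : ℕ, ∀ A : Finset V, A.card = n →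
      ∃ I ⊆ A, (A.card : ℝ) / (c + 1) ≤ I.card ∧
        ∀ v ∈ I, ∀ u ∈ I, ¬ (WReachGraph G L r).Adj v u := by
    intro n
    induction n using Nat.strong_induction_on with
    | _ n ih =>
      intro A hcard
      rcases A.eq_empty_or_nonempty with rfl | hA
      · exact ⟨∅, Finset.Subset.refl _, by simp, by simp⟩
      obtain ⟨v, hvA, hvdeg⟩ := WReach_min_step G L r c hc A hA
      set N : Set V := {u | (WReachGraph G L r).Adj v u ∧ u ∈ A} with hN
      set A' : Finset V := A \ insert v (Set.toFinite N).toFinset with hA'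
      have hA'sub : A' ⊆ A := Finset.sdiff_subset
      have hA'lt : A'.card < n := by
        rw [← hcard]
        apply Finset.card_lt_card
        constructor
        · exact hA'sub
        · intro hsub
          have := hsub hvA
          simp [hA'] at this
      obtain ⟨I', hI'sub, hI'card, hI'ind⟩ := ih A'.card hA'lt A' rfl
      have hvI' : v ∉ I' := by
        intro h
        have := hI'sub h
        simp [hA'] at this
      refine ⟨insert v I', ?_, ?_, ?_⟩
      · intro x hx
        rcases Finset.mem_insert.mp hx with rfl | hx
        · exact hvA
        · exact hA'sub (hI'sub hx)
      · rw [Finset.card_insert_of_notMem hvI']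
        have hS : (insert v (Set.toFinite N).toFinset).card ≤ c + 1 := by
          calc (insert v (Set.toFinite N).toFinset).card
              ≤ (Set.toFinite N).toFinset.card + 1 := Finset.card_insert_le _ _
            _ ≤ c + 1 := by
                have : (Set.toFinite N).toFinset.card = N.ncard := by
                  rw [Set.ncard_eq_toFinset_card']
                  congr 1
                  simp [Set.Finite.toFinset]
                omega
        have hcardA : A.card ≤ A'.card + (c + 1) := by
          calc A.card ≤ A'.card + (insert v (Set.toFinite N).toFinset).card := by
                rw [hA']
                exact Finset.card_le_card_sdiff_add_card
            _ ≤ A'.card + (c + 1) := by omega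
        have hpos : (0 : ℝ) < c + 1 := by positivity
        rw [div_le_iff₀ hpos]
        have h2 : (A'.card : ℝ) ≤ I'.card * (c + 1) := by
          rw [← div_le_iff₀ hpos]; exact hI'card
        have h3 : (A.card : ℝ) ≤ A'.card + (c + 1) := by exact_mod_cast hcardA
        push_cast
        nlinarith
      · intro x hx u hu hadj
        have hnot : ∀ w ∈ I', ¬ (WReachGraph G L r).Adj v w := by
          intro w hw h
          have hwA' := hI'sub hw
          have hwN : w ∈ N := ⟨h, hA'sub hwA'⟩
          simp only [hA', Finset.mem_sdiff, Finset.mem_insert, Set.Finite.mem_toFinset] at hwA'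
          exact hwA'.2 (Or.inr hwN)
        rcases Finset.mem_insert.mp hx with h1 | h1
        · rcases Finset.mem_insert.mp hu with h2 | h2
          · rw [h1, h2] at hadj; exact hadj.1 rfl
          · rw [h1] at hadj; exact hnot u h2 hadj
        · rcases Finset.mem_insert.mp hu with h2 | h2
          · rw [h2] at hadj; exact hnot x h1 hadj.symm
          · exact hI'ind x h1 u h2 hadj
  intro A
  obtain ⟨I, hIsub, hIcard, hIind⟩ := main A.card A rfl
  refine ⟨I, hIsub, hIcard, ?_⟩
  intro v hv
  ext u
  simp only [Set.mem_inter_iff, Set.mem_singleton_iff, Finset.coe_sort_coe, Finset.mem_coe]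
  constructor
  · rintro ⟨hu, huI⟩
    by_contra hne
    exact hIind u huI v hv ⟨hne, Or.inl hu⟩
  · rintro rfl
    exact ⟨self_mem_WReach G L r _, hv⟩
end
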